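/- Let Q := {μ ∈ P₁(H) : ∫_H ‖x‖² dμ(x) ≤ c} for a fixed constant c ≥ 0. Then Q is closed in P₁(H₋₁) with respect to the 1-Wasserstein distance d_{1,-1}: if μₙ ∈ Q converge to μ in (P₁(H₋₁), d_{1,-1}), then μ is supported on H and ∫_H ‖x‖² dμ(x) ≤ c. -/

import Mathlib

open MeasureTheory Filter
open scoped Topology ENNReal

/-- A coupling of two measures: a measure on the product with the prescribed marginals. -/
def IsCoupling {X : Type*} [MeasurableSpace X] (γ : Measure (X × X)) (μ ν : Measure X) : Prop :=
  γ.map Prod.fst = μ ∧ γ.map Prod.snd = ν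

/-- The Wasserstein-type transport distance associated with a cost function `c`.
With `c = dist` this is the `1`-Wasserstein distance. -/
noncomputable def W1 {X : Type*} [MeasurableSpace X] (c : X → X → ℝ) (μ ν : Measure X) : ℝ :=
  sInf {r | ∃ γ : Measure (X × X), IsCoupling γ μ ν ∧
    Integrable (fun p => c p.1 p.2) γ ∧ r = ∫ p, c p.1 p.2 ∂γ}

section FA

open scoped RealInnerProductSpace

/-- The image of a closed ball under a continuous linear map between real Hilbert spaces
is closed. -/
lemma image_closedBall_isClosed
    {H W : Type*}
    [NormedAddCommGroup H] [InnerProductSpace ℝ H] [CompleteSpace H]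
    [NormedAddCommGroup W] [InnerProductSpace ℝ W] [CompleteSpace W]
    (ι : H →L[ℝ] W) (r : ℝ) :
    IsClosed (⇑ι '' Metric.closedBall 0 r) := by
  rcases lt_or_ge r 0 with hr | hr
  · simp [Metric.closedBall_eq_empty.2 hr]
  set T : W →L[ℝ] H := ContinuousLinearMap.adjoint ι with hTdef
  have hT : ∀ (x : H) (w : W), ⟪ι x, w⟫ = ⟪x, T w⟫ := fun x w =>
    (ContinuousLinearMap.adjoint_inner_right ι x w).symm
  have hset : ⇑ι '' Metric.closedBall 0 r = {y : W | ∀ w : W, |⟪y, w⟫| ≤ r * ‖T w‖} := by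
    apply Set.Subset.antisymm
    · rintro _ ⟨x, hx, rfl⟩ w
      have hxr : ‖x‖ ≤ r := by simpa [dist_zero_right] using Metric.mem_closedBall.1 hx
      calc |⟪ι x, w⟫| = |⟪x, T w⟫| := by rw [hT]
        _ ≤ ‖x‖ * ‖T w‖ := abs_real_inner_le_norm _ _
        _ ≤ r * ‖T w‖ := mul_le_mul_of_nonneg_right hxr (norm_nonneg _)
    · intro y hy
      set Tl : W →ₗ[ℝ] H := (T : W →ₗ[ℝ] H) with hTl
      set ψ : W →ₗ[ℝ] ℝ := ((innerSL ℝ y : W →L[ℝ] ℝ) : W →ₗ[ℝ] ℝ) with hψ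
      have hψ_apply : ∀ w, ψ w = ⟪y, w⟫ := fun w => rfl
      have hker : LinearMap.ker Tl ≤ LinearMap.ker ψ := by
        intro w hw
        have hw' : Tl w = 0 := hw
        have h2 := hy w
        rw [show T w = Tl w from rfl, hw'] at h2
        simp only [norm_zero, mul_zero] at h2
        exact LinearMap.mem_ker.2 (abs_nonpos_iff.1 h2)
      set φ₀ : (W ⧸ LinearMap.ker Tl) →ₗ[ℝ] ℝ := (LinearMap.ker Tl).liftQ ψ hker with hφ₀
      set φ₁ : (LinearMap.range Tl) →ₗ[ℝ] ℝ :=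
        φ₀.comp (Tl.quotKerEquivRange.symm : (LinearMap.range Tl) →ₗ[ℝ] (W ⧸ LinearMap.ker Tl))
        with hφ₁
      have hφ₁_apply : ∀ (w : W) (h : Tl w ∈ LinearMap.range Tl),
          φ₁ ⟨Tl w, h⟩ = ⟪y, w⟫ := by
        intro w h
        have h1 : Tl.quotKerEquivRange.symm ⟨Tl w, h⟩ = Submodule.Quotient.mk w :=
          Tl.quotKerEquivRange_symm_apply_image w h
        simp only [hφ₁, LinearMap.comp_apply, LinearEquiv.coe_coe, h1, hφ₀,
          Submodule.liftQ_apply]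
        exact hψ_apply w
      have hbound : ∀ v : LinearMap.range Tl, ‖φ₁ v‖ ≤ r * ‖v‖ := by
        rintro ⟨v, hv⟩
        obtain ⟨w, rfl⟩ := hv
        rw [hφ₁_apply w (LinearMap.mem_range_self _ w)]
        have hyw : |⟪y, w⟫| ≤ r * ‖Tl w‖ := hy w
        simpa [Real.norm_eq_abs] using hyw
      set φ₂ : (LinearMap.range Tl) →L[ℝ] ℝ := φ₁.mkContinuous r hbound with hφ₂
      have hφ₂norm : ‖φ₂‖ ≤ r := φ₁.mkContinuous_norm_le hr hbound
      obtain ⟨g, hg_eq, hg_norm⟩ := exists_extension_norm_eq (LinearMap.range Tl) φ₂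
      set x : H := (InnerProductSpace.toDual ℝ H).symm g with hx
      have hx_inner : ∀ v : H, ⟪x, v⟫ = g v := fun v => InnerProductSpace.toDual_symm_apply
      have hx_norm : ‖x‖ ≤ r := by
        rw [hx, LinearIsometryEquiv.norm_map]
        rw [hg_norm]; exact hφ₂norm
      refine ⟨x, Metric.mem_closedBall.2 (by simpa [dist_zero_right] using hx_norm), ?_⟩
      have key : ∀ w : W, ⟪ι x - y, w⟫ = 0 := by
        intro w
        have h1 : ⟪ι x, w⟫ = ⟪x, T w⟫ := hT x w
        have h2 : ⟪x, T w⟫ = g (T w) := hx_inner (T w)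
        have h3 : g (T w) = φ₂ ⟨Tl w, LinearMap.mem_range_self _ w⟩ := by
          have h3' := hg_eq ⟨Tl w, LinearMap.mem_range_self _ w⟩
          rw [show ((⟨Tl w, LinearMap.mem_range_self _ w⟩ : LinearMap.range Tl) : H) = T w
            from rfl] at h3'
          rw [h3']
        have h4 : φ₂ ⟨Tl w, LinearMap.mem_range_self _ w⟩ = ⟪y, w⟫ :=
          hφ₁_apply w (LinearMap.mem_range_self _ w)
        rw [inner_sub_left, h1, h2, h3, h4, sub_self]
      have h0 : ι x - y = 0 := inner_self_eq_zero.1 (key (ι x - y))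
      exact sub_eq_zero.1 h0
  rw [hset]
  have : {y : W | ∀ w : W, |⟪y, w⟫| ≤ r * ‖T w‖} =
      ⋂ w : W, {y : W | |⟪y, w⟫| ≤ r * ‖T w‖} := by ext y; simp
  rw [this]
  exact isClosed_iInter fun w =>
    isClosed_le ((continuous_id.inner continuous_const).abs) continuous_const

end FA

/-- Let `Q := {μ ∈ P₁(H) : ∫ ‖x‖² dμ ≤ c}`. Then `Q` is closed in
`(P₁(H₋₁), d_{1,-1})`: if `μₙ ∈ Q` (viewed in `H₋₁` via the compact embedding `ι`) converge
to `μ` in the 1-Wasserstein distance of `H₋₁`, then `μ` is supported on `H`, i.e. `μ = ι_* μ'`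
for a probability measure `μ'` on `H`, and `∫_H ‖x‖² dμ' ≤ c`. -/
theorem statement_4
    {H W : Type*}
    [NormedAddCommGroup H] [InnerProductSpace ℝ H] [CompleteSpace H]
    [SecondCountableTopology H] [MeasurableSpace H] [BorelSpace H]
    [NormedAddCommGroup W] [InnerProductSpace ℝ W] [CompleteSpace W]
    [SecondCountableTopology W] [MeasurableSpace W] [BorelSpace W]
    -- the embedding `ι : H → H₋₁` is linear, continuous, injective and compact
    (ι : H →L[ℝ] W) (hι_inj : Function.Injective ⇑ι) (hι_compact : IsCompactOperator ⇑ι)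
    (c : ℝ) (hc : 0 ≤ c)
    (μ : ℕ → Measure H) (hprob : ∀ n, IsProbabilityMeasure (μ n))
    (hmem : ∀ n, ∫⁻ x, ENNReal.ofReal (‖x‖ ^ 2) ∂(μ n) ≤ ENNReal.ofReal c)
    (hmom1 : ∀ n, Integrable (fun x : H => ‖x‖) (μ n))
    (ν : Measure W) (hν : IsProbabilityMeasure ν)
    (hν1 : Integrable (fun y : W => ‖y‖) ν)
    (hconv : Tendsto (fun n => W1 dist ((μ n).map ι) ν) atTop (𝓝 0)) :
    ∃ μ' : Measure H, IsProbabilityMeasure μ' ∧ ν = μ'.map ι ∧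
      ∫⁻ x, ENNReal.ofReal (‖x‖ ^ 2) ∂μ' ≤ ENNReal.ofReal c := by
  classical
  have hιmeas : Measurable ⇑ι := ι.continuous.measurable
  set μt : ℕ → Measure W := fun n => (μ n).map ι with hμt
  have hμtprob : ∀ n, IsProbabilityMeasure (μt n) := fun n =>
    Measure.isProbabilityMeasure_map hιmeas.aemeasurable
  have hEmb : MeasurableEmbedding ⇑ι := ι.continuous.measurableEmbedding hι_inj
  set K : ℝ → Set W := fun r => ⇑ι '' Metric.closedBall 0 r with hK
  have hKclosed : ∀ r, IsClosed (K r) := fun r => image_closedBall_isClosed ι r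
  -- Step 1: extract near-optimal couplings
  have hcoup : ∀ n, ∃ γ : Measure (W × W), IsCoupling γ (μt n) ν ∧
      Integrable (fun p : W × W => dist p.1 p.2) γ ∧
      0 ≤ ∫ p, dist p.1 p.2 ∂γ ∧
      ∫ p, dist p.1 p.2 ∂γ ≤ W1 dist (μt n) ν + 1 / (n + 1) := by
    intro n
    haveI := hμtprob n
    have hmapfst : ((μt n).prod ν).map Prod.fst = μt n := by
      rw [Measure.map_fst_prod]; simp
    have hmapsnd : ((μt n).prod ν).map Prod.snd = ν := by
      rw [Measure.map_snd_prod]; simp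
    have hn1 : Integrable (fun y : W => ‖y‖) (μt n) := by
      rw [hμt]
      rw [integrable_map_measure continuous_norm.aestronglyMeasurable hιmeas.aemeasurable]
      refine ((hmom1 n).const_mul ‖ι‖).mono
        (ι.continuous.norm.aestronglyMeasurable) (ae_of_all _ fun x => ?_)
      simp only [Function.comp_apply, Real.norm_eq_abs]
      rw [abs_of_nonneg (mul_nonneg (norm_nonneg ι) (norm_nonneg x)),
        abs_of_nonneg (norm_nonneg _)]
      exact ι.le_opNorm x
    have hfst : Integrable (fun p : W × W => ‖p.1‖) ((μt n).prod ν) := by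
      have h := hn1
      rw [← hmapfst] at h
      exact (integrable_map_measure continuous_norm.aestronglyMeasurable
        measurable_fst.aemeasurable).1 h
    have hsnd : Integrable (fun p : W × W => ‖p.2‖) ((μt n).prod ν) := by
      have h := hν1
      rw [← hmapsnd] at h
      exact (integrable_map_measure continuous_norm.aestronglyMeasurable
        measurable_snd.aemeasurable).1 h
    have hdint : Integrable (fun p : W × W => dist p.1 p.2) ((μt n).prod ν) := by
      refine (hfst.add hsnd).mono
        ((continuous_fst.dist continuous_snd).aestronglyMeasurable)
        (ae_of_all _ fun p => ?_)
      simp only [Pi.add_apply, Real.norm_eq_abs, abs_of_nonneg dist_nonneg]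
      rw [abs_of_nonneg (add_nonneg (norm_nonneg _) (norm_nonneg _))]
      rw [dist_eq_norm]
      exact norm_sub_le _ _
    set S : Set ℝ := {r | ∃ γ : Measure (W × W), IsCoupling γ (μt n) ν ∧
      Integrable (fun p => dist p.1 p.2) γ ∧ r = ∫ p, dist p.1 p.2 ∂γ} with hS
    have hSne : S.Nonempty :=
      ⟨∫ p, dist p.1 p.2 ∂((μt n).prod ν), (μt n).prod ν, ⟨hmapfst, hmapsnd⟩, hdint, rfl⟩
    have hpos : (0:ℝ) < 1 / (n + 1) := by positivity
    obtain ⟨r, hrS, hrlt⟩ := Real.lt_sInf_add_pos hSne hpos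
    obtain ⟨γ, hγc, hγint, rfl⟩ := hrS
    have hnn : 0 ≤ ∫ p, dist p.1 p.2 ∂γ := integral_nonneg fun p => dist_nonneg
    refine ⟨γ, hγc, hγint, hnn, ?_⟩
    have : W1 dist (μt n) ν = sInf S := rfl
    rw [this]
    exact hrlt.le
  choose γ hγc hγint hγnn hγle using hcoup
  set ε : ℕ → ℝ := fun n => ∫ p, dist p.1 p.2 ∂(γ n) with hεdef
  have hε0 : Tendsto ε atTop (𝓝 0) := by
    have hup : Tendsto (fun n : ℕ => W1 dist (μt n) ν + 1 / (n + 1)) atTop (𝓝 0) := by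
      have h2 : Tendsto (fun n : ℕ => 1 / ((n : ℝ) + 1)) atTop (𝓝 0) :=
        tendsto_one_div_add_atTop_nhds_zero_nat
      simpa using hconv.add h2
    exact tendsto_of_tendsto_of_tendsto_of_le_of_le tendsto_const_nhds hup hγnn hγle
  -- Step 2: portmanteau for open sets
  have key : ∀ U : Set W, IsOpen U → ν U ≤ liminf (fun n => μt n U) atTop := by
    intro U hU
    by_cases hUc : Uᶜ = ∅
    · have hUuniv : U = Set.univ := by rwa [Set.compl_empty_iff] at hUc
      subst hUuniv
      have : ∀ n, μt n Set.univ = 1 := fun n => (hμtprob n).measure_univ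
      simp only [this]
      rw [liminf_const]
      exact hν.measure_univ.le
    · have hne : Uᶜ.Nonempty := Set.nonempty_iff_ne_empty.2 hUc
      set L := liminf (fun n => μt n U) atTop with hL
      set F : ℕ → Set W := fun m => {y | 1 / ((m : ℝ) + 1) ≤ Metric.infDist y Uᶜ} with hF
      have hFclosed : ∀ m, IsClosed (F m) :=
        fun m => isClosed_le continuous_const (Metric.continuous_infDist_pt _)
      have hFU : ∀ m, F m ⊆ U := by
        intro m y hy
        by_contra hyU
        have h0 : Metric.infDist y Uᶜ = 0 := Metric.infDist_zero_of_mem hyU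
        have : (0:ℝ) < 1 / ((m : ℝ) + 1) := by positivity
        have hy' : 1 / ((m : ℝ) + 1) ≤ 0 := h0 ▸ hy
        linarith
      have hFL : ∀ m, ν (F m) ≤ L := by
        intro m
        set δ : ℝ := 1 / ((m : ℝ) + 1) with hδdef
        have hδ : 0 < δ := by positivity
        have hstep : ∀ n, ν (F m) ≤ μt n U + ENNReal.ofReal (ε n / δ) := by
          intro n
          obtain ⟨hγ1, hγ2⟩ := hγc n
          have hsndm : ν (F m) = γ n (Prod.snd ⁻¹' F m) := by
            rw [← hγ2, Measure.map_apply measurable_snd (hFclosed m).measurableSet]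
          have hfstm : μt n U = γ n (Prod.fst ⁻¹' U) := by
            rw [← hγ1, Measure.map_apply measurable_fst hU.measurableSet]
          have hsub : Prod.snd ⁻¹' F m ⊆
              (Prod.fst ⁻¹' U) ∪ {p : W × W | δ ≤ dist p.1 p.2} := by
            rintro ⟨p1, p2⟩ hp
            simp only [Set.mem_preimage, hF, Set.mem_setOf_eq] at hp
            by_cases h1 : p1 ∈ U
            · exact Or.inl h1
            · right
              have h2 := Metric.infDist_le_dist_of_mem (x := p2) (show p1 ∈ Uᶜ from h1)
              simp only [Set.mem_setOf_eq]
              calc δ ≤ Metric.infDist p2 Uᶜ := hp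
                _ ≤ dist p2 p1 := h2
                _ = dist p1 p2 := dist_comm _ _
          have hmarkov : γ n {p : W × W | δ ≤ dist p.1 p.2} ≤ ENNReal.ofReal (ε n / δ) := by
            have hmono : {p : W × W | δ ≤ dist p.1 p.2} ⊆
                {p : W × W | ENNReal.ofReal δ ≤ ENNReal.ofReal (dist p.1 p.2)} :=
              fun p hp => ENNReal.ofReal_le_ofReal hp
            have hdm : AEMeasurable (fun p : W × W => ENNReal.ofReal (dist p.1 p.2)) (γ n) :=
              ((continuous_fst.dist continuous_snd).measurable.ennreal_ofReal).aemeasurable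
            have h1 := mul_meas_ge_le_lintegral₀ hdm (ENNReal.ofReal δ)
            have h2 : ∫⁻ p, ENNReal.ofReal (dist p.1 p.2) ∂(γ n) = ENNReal.ofReal (ε n) :=
              (ofReal_integral_eq_lintegral_ofReal (hγint n)
                (ae_of_all _ fun p => dist_nonneg)).symm
            calc γ n {p : W × W | δ ≤ dist p.1 p.2}
                ≤ γ n {p : W × W | ENNReal.ofReal δ ≤ ENNReal.ofReal (dist p.1 p.2)} :=
                  measure_mono hmono
              _ ≤ ENNReal.ofReal (ε n) / ENNReal.ofReal δ := by
                  rw [ENNReal.le_div_iff_mul_le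
                    (Or.inl (ENNReal.ofReal_pos.2 hδ).ne') (Or.inl ENNReal.ofReal_ne_top)]
                  rw [mul_comm, ← h2]
                  exact h1
              _ = ENNReal.ofReal (ε n / δ) := (ENNReal.ofReal_div_of_pos hδ).symm
          calc ν (F m) = γ n (Prod.snd ⁻¹' F m) := hsndm
            _ ≤ γ n ((Prod.fst ⁻¹' U) ∪ {p : W × W | δ ≤ dist p.1 p.2}) := measure_mono hsub
            _ ≤ γ n (Prod.fst ⁻¹' U) + γ n {p : W × W | δ ≤ dist p.1 p.2} := measure_union_le _ _
            _ ≤ μt n U + ENNReal.ofReal (ε n / δ) := by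
                rw [hfstm]; exact add_le_add_right hmarkov _
        refine ENNReal.le_of_forall_pos_le_add fun η hη _ => ?_
        have hεδ : Tendsto (fun n => ε n / δ) atTop (𝓝 0) := by
          simpa using hε0.div_const δ
        have hev : ∀ᶠ n in atTop, ε n / δ < (η : ℝ) :=
          hεδ.eventually_lt_const (by exact_mod_cast hη)
        have hev2 : ∀ᶠ n in atTop, ν (F m) - (η : ℝ≥0∞) ≤ μt n U := by
          filter_upwards [hev] with n hn
          have hofη : ENNReal.ofReal (ε n / δ) ≤ (η : ℝ≥0∞) := by
            rw [← ENNReal.ofReal_coe_nnreal]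
            exact ENNReal.ofReal_le_ofReal hn.le
          exact tsub_le_iff_right.2 ((hstep n).trans (add_le_add_right hofη _))
        have hle : ν (F m) - (η : ℝ≥0∞) ≤ L := le_liminf_of_le (by isBoundedDefault) hev2
        exact tsub_le_iff_right.1 hle
      have hUnion : U = ⋃ m, F m := by
        apply Set.Subset.antisymm
        · intro y hy
          have hpos : 0 < Metric.infDist y Uᶜ :=
            (hU.isClosed_compl.notMem_iff_infDist_pos hne).1 (by simpa using hy)
          obtain ⟨m, hm⟩ := exists_nat_one_div_lt hpos
          exact Set.mem_iUnion.2 ⟨m, hm.le⟩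
        · exact Set.iUnion_subset hFU
      have hmono : Monotone F := by
        intro a b hab y hy
        simp only [hF, Set.mem_setOf_eq] at hy ⊢
        refine le_trans ?_ hy
        apply one_div_le_one_div_of_le
        · positivity
        · exact_mod_cast add_le_add_left (Nat.cast_le.2 hab) 1
      rw [hUnion, (hmono.directed_le).measure_iUnion]
      exact iSup_le hFL
  -- Step 3: Chebyshev and its consequences
  have hmeas2 : Measurable fun x : H => ‖x‖ ^ 2 := measurable_norm.pow_const 2
  have cheb : ∀ (n : ℕ) (r : ℝ), 0 < r →
      μ n {x : H | r < ‖x‖} ≤ ENNReal.ofReal c / ENNReal.ofReal (r ^ 2) := by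
    intro n r hr
    have h1 := mul_meas_ge_le_lintegral₀
      (μ := μ n) (hmeas2.ennreal_ofReal).aemeasurable (ENNReal.ofReal (r ^ 2))
    have hsub : {x : H | r < ‖x‖} ⊆
        {x : H | ENNReal.ofReal (r ^ 2) ≤ ENNReal.ofReal (‖x‖ ^ 2)} := by
      intro x hx
      have hx' : r < ‖x‖ := hx
      exact ENNReal.ofReal_le_ofReal (by nlinarith [hx'.le, hr.le] : r ^ 2 ≤ ‖x‖ ^ 2)
    calc μ n {x : H | r < ‖x‖} ≤ _ := measure_mono hsub
      _ ≤ ENNReal.ofReal c / ENNReal.ofReal (r ^ 2) := by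
          rw [ENNReal.le_div_iff_mul_le
            (Or.inl (ENNReal.ofReal_pos.2 (by positivity)).ne') (Or.inl ENNReal.ofReal_ne_top)]
          rw [mul_comm]
          exact h1.trans (hmem n)
  have hμtK : ∀ (n : ℕ) (r : ℝ), μt n (K r)ᶜ = μ n {x : H | r < ‖x‖} := by
    intro n r
    rw [hμt]
    rw [Measure.map_apply hιmeas (hKclosed r).measurableSet.compl]
    congr 1
    rw [Set.preimage_compl, hK]
    rw [Set.preimage_image_eq _ hι_inj]
    ext x
    simp [Metric.mem_closedBall, dist_zero_right, not_le]
  have hνK : ∀ r : ℝ, 0 < r → ν (K r)ᶜ ≤ ENNReal.ofReal c / ENNReal.ofReal (r ^ 2) := by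
    intro r hr
    refine (key _ (hKclosed r).isOpen_compl).trans ?_
    refine liminf_le_of_frequently_le (Frequently.of_forall fun n => ?_)
    rw [hμtK n r]
    exact cheb n r hr
  -- Step 4: ν is concentrated on the range of ι
  have hrangemeas : MeasurableSet (Set.range ⇑ι) := hEmb.measurableSet_range
  have hcompl0 : ν (Set.range ⇑ι)ᶜ = 0 := by
    have hsub : ∀ m : ℕ, (Set.range ⇑ι)ᶜ ⊆ (K ((m : ℝ) + 1))ᶜ := by
      intro m
      apply Set.compl_subset_compl.2
      rintro _ ⟨x, _, rfl⟩
      exact Set.mem_range_self x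
    have hbound : ∀ m : ℕ, ν (Set.range ⇑ι)ᶜ ≤ ENNReal.ofReal (c / ((m : ℝ) + 1) ^ 2) := by
      intro m
      refine (measure_mono (hsub m)).trans ((hνK ((m : ℝ) + 1) (by positivity)).trans_eq ?_)
      rw [ENNReal.ofReal_div_of_pos (by positivity)]
    have htendreal : Tendsto (fun m : ℕ => c / ((m : ℝ) + 1) ^ 2) atTop (𝓝 0) := by
      apply Tendsto.div_atTop tendsto_const_nhds
      have h1 : Tendsto (fun m : ℕ => (m : ℝ) + 1) atTop atTop :=
        tendsto_atTop_add_const_right _ _ tendsto_natCast_atTop_atTop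
      exact (tendsto_pow_atTop two_ne_zero).comp h1
    have htend : Tendsto (fun m : ℕ => ENNReal.ofReal (c / ((m : ℝ) + 1) ^ 2)) atTop (𝓝 0) := by
      have h2 := ENNReal.tendsto_ofReal htendreal
      simpa using h2
    exact le_antisymm (ge_of_tendsto' htend hbound) (zero_le)
  have hrange1 : ν (Set.range ⇑ι) = 1 := (prob_compl_eq_zero_iff hrangemeas).1 hcompl0
  -- Step 5: construct μ' and conclude
  set μ' : Measure H := ν.comap ⇑ι with hμ'def
  have hcomap : ∀ s : Set H, μ' s = ν (⇑ι '' s) := fun s => hEmb.comap_apply ν s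
  have hμ'prob : IsProbabilityMeasure μ' := by
    constructor
    rw [hcomap Set.univ, Set.image_univ, hrange1]
  have hmapback : ν = μ'.map ⇑ι := by
    rw [hμ'def, hEmb.map_comap ν]
    refine (Measure.restrict_eq_self_of_ae_mem ?_).symm
    rw [ae_iff]
    exact hcompl0
  refine ⟨μ', hμ'prob, hmapback, ?_⟩
  haveI := hμ'prob
  have hlayer : ∫⁻ x, ENNReal.ofReal (‖x‖ ^ 2) ∂μ' =
      ∫⁻ t in Set.Ioi (0:ℝ), μ' {x : H | t < ‖x‖ ^ 2} :=
    lintegral_eq_lintegral_meas_lt μ' (ae_of_all _ fun x => sq_nonneg _) hmeas2.aemeasurable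
  have hseteq : ∀ t : ℝ, 0 < t →
      {x : H | Real.sqrt t < ‖x‖} = {x : H | t < ‖x‖ ^ 2} := by
    intro t ht
    ext x
    simp only [Set.mem_setOf_eq]
    constructor
    · intro h
      have h1 : (0:ℝ) ≤ Real.sqrt t := Real.sqrt_nonneg t
      have h2 : Real.sqrt t ^ 2 = t := Real.sq_sqrt ht.le
      have h3 := mul_self_lt_mul_self h1 h
      nlinarith [h3]
    · intro h
      have hx0 : 0 < ‖x‖ := by nlinarith [norm_nonneg x]
      exact (Real.sqrt_lt' hx0).2 h
  have hptwise : ∀ t : ℝ, 0 < t →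
      μ' {x : H | t < ‖x‖ ^ 2} ≤ liminf (fun n => μ n {x : H | t < ‖x‖ ^ 2}) atTop := by
    intro t ht
    rw [hcomap]
    have himg : ⇑ι '' {x : H | t < ‖x‖ ^ 2} ⊆ (K (Real.sqrt t))ᶜ := by
      rintro _ ⟨x, hx, rfl⟩ hmemK
      obtain ⟨x', hx', hxx'⟩ := hmemK
      have hxeq : x' = x := hι_inj hxx'
      subst hxeq
      have hx1 : ‖x'‖ ≤ Real.sqrt t := by
        simpa [dist_zero_right] using Metric.mem_closedBall.1 hx'
      have hx2 : t < ‖x'‖ ^ 2 := hx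
      have h2 : Real.sqrt t ^ 2 = t := Real.sq_sqrt ht.le
      nlinarith [mul_self_le_mul_self (norm_nonneg x') hx1]
    refine ((measure_mono himg).trans (key _ (hKclosed _).isOpen_compl)).trans ?_
    refine le_of_eq ?_
    apply liminf_congr
    refine Eventually.of_forall fun n => ?_
    rw [hμtK n _, hseteq t ht]
  calc ∫⁻ x, ENNReal.ofReal (‖x‖ ^ 2) ∂μ'
      = ∫⁻ t in Set.Ioi (0:ℝ), μ' {x : H | t < ‖x‖ ^ 2} := hlayer
    _ ≤ ∫⁻ t in Set.Ioi (0:ℝ), liminf (fun n => μ n {x : H | t < ‖x‖ ^ 2}) atTop := by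
        refine lintegral_mono_ae ((ae_restrict_iff' measurableSet_Ioi).2
          (ae_of_all _ fun t ht => hptwise t ht))
    _ ≤ liminf (fun n => ∫⁻ t in Set.Ioi (0:ℝ), μ n {x : H | t < ‖x‖ ^ 2}) atTop := by
        refine lintegral_liminf_le fun n => ?_
        have hanti : Antitone fun t : ℝ => μ n {x : H | t < ‖x‖ ^ 2} := by
          intro a b hab
          exact measure_mono fun x hx => lt_of_le_of_lt hab hx
        exact hanti.measurable
    _ ≤ ENNReal.ofReal c := by
        refine liminf_le_of_frequently_le (Frequently.of_forall fun n => ?_)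
        rw [← lintegral_eq_lintegral_meas_lt (μ n)
          (ae_of_all _ fun x => sq_nonneg ‖x‖) hmeas2.aemeasurable]
        exact hmem n
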